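/- Let k ∈ ℝ with k ≠ 0, M ∈ ℝ with M ≠ 0, ω ∈ ℂ, and set c = ω/k. Let v₀ : ℝ → ℝ be differentiable, and let u, w, p : ℝ → ℂ be functions with w and p differentiable, such that for all z: (1) i·ω·u(z) = i·k·v₀(z)·u(z) + v₀'(z)·w(z) + i·k·p(z); (2) i·ω·w(z) = i·k·v₀(z)·w(z) + p'(z); (3) i·ω·p(z) = (i·k/M²)·u(z) + (1/M²)·w'(z) + i·k·v₀(z)·p(z). Assume 1 − M²·(v₀(z) − c)² ≠ 0 for all z and v₀(z) − c ≠ 0 for all z. Then the function z ↦ ((v₀(z) − c)·w'(z) − v₀'(z)·w(z)) / (1 − M²·(v₀(z) − c)²) is differentiable and its derivative equals k²·(v₀(z) − c)·w(z) for all z; i.e. w = v₁_z satisfies the compressible Rayleigh equation (((v₀ − c)·v₁_z' − v₀'·v₁_z)/(1 − M²(v₀ − c)²))' − k²(v₀ − c)·v₁_z = 0. -/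

import Mathlib

open Complex

/-- Reduction of the linearized shear-layer equations (Eq. (5) of the paper) to the
compressible Rayleigh equation (Eq. (23) of the paper) for `w = v₁_z`. -/
theorem stmt_14 (k M : ℝ) (hk : k ≠ 0) (hM : M ≠ 0) (ω : ℂ)
    (v₀ : ℝ → ℝ) (hv₀ : Differentiable ℝ v₀)
    (u w p : ℝ → ℂ) (hw : Differentiable ℝ w) (hp : Differentiable ℝ p)
    (h1 : ∀ z, Complex.I * ω * u z =
      Complex.I * k * (v₀ z) * u z + ((deriv v₀ z : ℝ) : ℂ) * w z + Complex.I * k * p z)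
    (h2 : ∀ z, Complex.I * ω * w z =
      Complex.I * k * (v₀ z) * w z + deriv p z)
    (h3 : ∀ z, Complex.I * ω * p z =
      Complex.I * k / (M ^ 2 : ℂ) * u z + (1 / (M ^ 2 : ℂ)) * deriv w z +
        Complex.I * k * (v₀ z) * p z)
    (hden : ∀ z, (1 : ℂ) - (M ^ 2 : ℂ) * ((v₀ z : ℂ) - ω / k) ^ 2 ≠ 0)
    (hsing : ∀ z, (v₀ z : ℂ) - ω / k ≠ 0) :
    Differentiable ℝ (fun z =>
      (((v₀ z : ℂ) - ω / k) * deriv w z - ((deriv v₀ z : ℝ) : ℂ) * w z) /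
        (1 - (M ^ 2 : ℂ) * ((v₀ z : ℂ) - ω / k) ^ 2)) ∧
    ∀ z, deriv (fun z =>
      (((v₀ z : ℂ) - ω / k) * deriv w z - ((deriv v₀ z : ℝ) : ℂ) * w z) /
        (1 - (M ^ 2 : ℂ) * ((v₀ z : ℂ) - ω / k) ^ 2)) z =
      (k ^ 2 : ℂ) * ((v₀ z : ℂ) - ω / k) * w z := by
  have hkC : (k : ℂ) ≠ 0 := by exact_mod_cast hk
  have hMC : (M : ℂ) ≠ 0 := by exact_mod_cast hM
  have key : (fun z => (((v₀ z : ℂ) - ω / k) * deriv w z - ((deriv v₀ z : ℝ) : ℂ) * w z) /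
        (1 - (M ^ 2 : ℂ) * ((v₀ z : ℂ) - ω / k) ^ 2))
      = fun z => Complex.I * k * p z := by
    funext z
    rw [div_eq_iff (hden z)]
    have h1' := h1 z
    have h3' := h3 z
    field_simp at h3' ⊢
    linear_combination (-((k:ℂ) * (v₀ z : ℂ) - ω)) * h3' + (k:ℂ) * h1'
  rw [key]
  constructor
  · exact (differentiable_const _).mul hp
  · intro z
    rw [deriv_const_mul _ (hp z)]
    have h2' := h2 z
    field_simp
    linear_combination (-Complex.I) * h2' - ((k:ℂ) * (v₀ z : ℂ) - ω) * w z * Complex.I_sq
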